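/- Let g : ℝ → L(F) be the fundamental solution associated to the continuous curve X : ℝ → L(F). For fixed s ∈ ℝ, let h : ℝ → L(F) be the fundamental solution associated to t ↦ X(t+s). Then g(s) is invertible with inverse h(-s). -/

import Mathlib

open Set

/-- Uniqueness of solutions of the linear ODE `y' = X t ∘L y` on all of `ℝ`. -/
lemma linear_ODE_unique
    {F : Type*} [NormedAddCommGroup F] [NormedSpace ℝ F] [CompleteSpace F]
    (X : ℝ → F →L[ℝ] F) (M : ℝ) (hM : ∀ t, ‖X t‖ ≤ M)
    (f g : ℝ → F →L[ℝ] F)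
    (hf : ∀ t, HasDerivAt f (X t ∘L f t) t)
    (hg : ∀ t, HasDerivAt g (X t ∘L g t) t)
    (t₀ : ℝ) (heq : f t₀ = g t₀) : ∀ t, f t = g t := by
  intro t
  set K : NNReal := ⟨max M 0, le_max_right _ _⟩ with hK
  have hlip : ∀ u : ℝ, LipschitzOnWith K (fun y : F →L[ℝ] F => X u ∘L y)
      (univ : Set (F →L[ℝ] F)) := by
    intro u
    rw [lipschitzOnWith_univ]
    apply LipschitzWith.of_dist_le_mul
    intro a b
    rw [dist_eq_norm, dist_eq_norm, ← ContinuousLinearMap.comp_sub]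
    calc ‖X u ∘L (a - b)‖ ≤ ‖X u‖ * ‖a - b‖ := ContinuousLinearMap.opNorm_comp_le _ _
      _ ≤ (max M 0) * ‖a - b‖ := by
          apply mul_le_mul_of_nonneg_right ((hM u).trans (le_max_left _ _)) (norm_nonneg _)
  have hmem : t₀ ∈ Ioo (min t₀ t - 1) (max t₀ t + 1) :=
    ⟨by nlinarith [min_le_left t₀ t], by nlinarith [le_max_left t₀ t]⟩
  have := ODE_solution_unique_of_mem_Ioo (v := fun u y => X u ∘L y)
    (s := fun _ => (univ : Set (F →L[ℝ] F))) (fun u _ => hlip u) hmem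
    (fun u _ => ⟨hf u, trivial⟩) (fun u _ => ⟨hg u, trivial⟩) heq
  exact this ⟨by nlinarith [min_le_right t₀ t], by nlinarith [le_max_right t₀ t]⟩

/-- If `g` is the fundamental solution associated to `X` and `h` is the fundamental
solution associated to `t ↦ X (t + s)`, then `g s` is invertible with inverse `h (-s)`. -/
theorem fundamental_solution_inverse
    {F : Type*} [NormedAddCommGroup F] [NormedSpace ℝ F] [CompleteSpace F]
    (X g h : ℝ → F →L[ℝ] F) (s : ℝ)
    (hX : Continuous X) (hXbdd : ∃ M : ℝ, ∀ t, ‖X t‖ ≤ M)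
    (hg0 : g 0 = 1) (hg : ∀ t, HasDerivAt g (X t ∘L g t) t)
    (hh0 : h 0 = 1) (hh : ∀ t, HasDerivAt h (X (t + s) ∘L h t) t) :
    g s ∘L h (-s) = 1 ∧ h (-s) ∘L g s = 1 := by
  obtain ⟨M, hM⟩ := hXbdd
  constructor
  · -- compare `t ↦ g (t + s) ∘L h (-s)` and `t ↦ h t` for the field `X (· + s)`
    have key : ∀ t, (fun t => g (t + s) ∘L h (-s)) t = h t := by
      refine linear_ODE_unique (fun u => X (u + s)) M (fun u => hM _) _ _ ?_ hh (-s) (by simp [hg0, ContinuousLinearMap.one_def])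
      · intro t
        have h1 : HasDerivAt (fun u => g (u + s)) (X (t + s) ∘L g (t + s)) t := by
          have := (hg (t + s)).scomp t ((hasDerivAt_id t).add_const s)
          simpa [Function.comp_def] using this
        have := h1.clm_comp (hasDerivAt_const t (h (-s)))
        simpa [ContinuousLinearMap.comp_assoc] using this
    have := key 0
    simpa [hh0] using this
  · -- compare `t ↦ h (t - s) ∘L g s` and `t ↦ g t` for the field `X`
    have key : ∀ t, (fun t => h (t - s) ∘L g s) t = g t := by
      refine linear_ODE_unique X M hM _ _ ?_ hg s (by simp [hh0, ContinuousLinearMap.one_def])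
      · intro t
        have h1 : HasDerivAt (fun u => h (u - s)) (X t ∘L h (t - s)) t := by
          have := (hh (t - s)).scomp t ((hasDerivAt_id t).sub_const s)
          simpa [sub_add_cancel, Function.comp_def] using this
        have := h1.clm_comp (hasDerivAt_const t (g s))
        simpa [ContinuousLinearMap.comp_assoc] using this
    have := key 0
    simpa [hg0] using this
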